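/- (Flat-background energy-momentum conservation.) Let d ≥ 3, κ := 1/(d−2), and let η be the constant Minkowski metric diag(−1,1,…,1) on ℝ^d. Let φ : ℝ^d → ℝ and H : ℝ^d → Λ³(ℝ^d)* be smooth, with H closed (∂_α H_{βγδ} − ∂_β H_{αγδ} + ∂_γ H_{αβδ} − ∂_δ H_{αβγ} = 0), and set ξ := dφ (so ξ_μ = ∂_μ φ). Assume the Einstein-frame H-field equation ∂^μ H_{μνλ} = (4/(d−2))·ξ^μ H_{μνλ} for all ν,λ, and the Einstein-frame dilaton equation ∂^μ∂_μ φ = −(e^{−4κφ}/6)·|H|²_η. Define the energy-momentum tensor T := (1/(d−2))·[ξ⊗ξ − (|ξ|²_η/2)·η] + (e^{−4κφ}/4)·[H² − (|H|²_η/6)·η]. Then T is divergence-free: ∂^μ T_{μν} = 0 for every ν. -/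

import Mathlib

open scoped BigOperators

namespace GEE

/-- Components (in a fixed basis) of a covariant `k`-tensor on a `d`-dimensional
real vector space. -/
abbrev Tensor (d k : ℕ) : Type := (Fin k → Fin d) → ℝ

/-- The component tensor `ω` is alternating (totally antisymmetric). -/
def IsAlt {d k : ℕ} (ω : Tensor d k) : Prop :=
  ∀ (v : Fin k → Fin d) (σ : Equiv.Perm (Fin k)),
    ω (v ∘ σ) = ((Equiv.Perm.sign σ : ℤ) : ℝ) * ω v

/-- The Minkowski matrix `diag(-1, 1, …, 1)`. -/
def mink (d : ℕ) : Matrix (Fin d) (Fin d) ℝ :=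
  Matrix.diagonal fun i => if (i : ℕ) = 0 then (-1 : ℝ) else 1

/-- `g` is a symmetric bilinear form of Lorentzian signature `(−,+,…,+)`. -/
def IsLorentzian {d : ℕ} (g : Matrix (Fin d) (Fin d) ℝ) : Prop :=
  g.IsSymm ∧ ∃ P : Matrix (Fin d) (Fin d) ℝ, IsUnit P.det ∧ g = P.transpose * mink d * P

/-- Evaluation of a bilinear form (given by its component matrix `A`) on two vectors. -/
def evalBilin {d : ℕ} (A : Matrix (Fin d) (Fin d) ℝ) (X Y : Fin d → ℝ) : ℝ :=
  ∑ μ, ∑ ν, X μ * A μ ν * Y ν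

/-- Interior product `i_N ω`: contraction of the first slot of `ω` with the vector `N`. -/
def iprod {d k : ℕ} (N : Fin d → ℝ) (ω : Tensor d (k + 1)) : Tensor d k :=
  fun v => ∑ μ, N μ * ω (Fin.cons μ v)

/-- `ω` is tangential: contracting `N` into any slot yields zero.  For alternating
tensors this is equivalent to `i_N ω = 0` (vanishing of the first-slot contraction),
and for `k = 0` the condition is vacuous. -/
def Tangential {d k : ℕ} (N : Fin d → ℝ) (ω : Tensor d k) : Prop :=
  ∀ (i : Fin k) (v : Fin k → Fin d), ∑ μ, N μ * ω (Function.update v i μ) = 0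

/-- The flat `N♭ = g(N,·)` of a vector `N`, i.e. `(N♭)_μ = g_{μν} N^ν`. -/
def flat {d : ℕ} (g : Matrix (Fin d) (Fin d) ℝ) (N : Fin d → ℝ) : Fin d → ℝ :=
  fun μ => ∑ ν, g μ ν * N ν

/-- Wedge product `α ∧ w` of a 1-form `α` with a `k`-form `w`, in components. -/
def wedge1 {d k : ℕ} (α : Fin d → ℝ) (w : Tensor d k) : Tensor d (k + 1) :=
  fun v => ∑ i : Fin (k + 1), (-1 : ℝ) ^ (i : ℕ) * α (v i) * w (v ∘ i.succAbove)

/-- Full contraction `|ω|² = ω_{μ₁…μ_k} ω^{μ₁…μ_k}`, all indices raised with `minv`. -/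
def normSq {d k : ℕ} (minv : Matrix (Fin d) (Fin d) ℝ) (ω : Tensor d k) : ℝ :=
  ∑ v : Fin k → Fin d, ∑ w : Fin k → Fin d, (∏ i, minv (v i) (w i)) * ω v * ω w

/-- `|α|² = minv^{μν} α_μ α_ν` for a 1-form `α`. -/
def oneNormSq {d : ℕ} (minv : Matrix (Fin d) (Fin d) ℝ) (α : Fin d → ℝ) : ℝ :=
  ∑ μ, ∑ ν, minv μ ν * α μ * α ν

/-- The inverse of the induced Riemannian metric `g_W` on `W = N^⊥` (for a unit
timelike `N`), pushed forward to the ambient space: `g_W^{μν} = g^{μν} + N^μ N^ν`.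
Contracting tangential tensors with this matrix computes their full `g_W`-contraction. -/
noncomputable def ginvW {d : ℕ} (g : Matrix (Fin d) (Fin d) ℝ) (N : Fin d → ℝ) :
    Matrix (Fin d) (Fin d) ℝ :=
  g⁻¹ + Matrix.vecMulVec N N

/-- `H²_{μν} = ginv^{κλ} ginv^{ωπ} H_{μκω} H_{νλπ}` for a 3-form `H`. -/
def Hsq {d : ℕ} (ginv : Matrix (Fin d) (Fin d) ℝ) (H : Tensor d 3) :
    Matrix (Fin d) (Fin d) ℝ :=
  Matrix.of fun μ ν => ∑ κ, ∑ l, ∑ o, ∑ p,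
    ginv κ l * ginv o p * H ![μ, κ, o] * H ![ν, l, p]

/-- `tr_g A = ginv^{μν} A_{μν}`. -/
def trWith {d : ℕ} (ginv A : Matrix (Fin d) (Fin d) ℝ) : ℝ :=
  ∑ μ, ∑ ν, ginv μ ν * A μ ν

/-- `C(h,H)_i = gWinv^{kl} gWinv^{mn} h_{km} H_{lni}`. -/
def Ccontr {d : ℕ} (gWinv : Matrix (Fin d) (Fin d) ℝ) (h : Tensor d 2)
    (H : Tensor d 3) : Fin d → ℝ :=
  fun i => ∑ k, ∑ l, ∑ m, ∑ n, gWinv k l * gWinv m n * h ![k, m] * H ![l, n, i]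

/-- Partial derivative `∂_μ f` at `x` of a scalar field on `ℝ^d`. -/
noncomputable def pder {d : ℕ} (μ : Fin d) (f : (Fin d → ℝ) → ℝ) (x : Fin d → ℝ) : ℝ :=
  fderiv ℝ f x (Pi.single μ 1)


def eps {d : ℕ} (i : Fin d) : ℝ := if (i : ℕ) = 0 then (-1 : ℝ) else 1

lemma eps_mul_self {d : ℕ} (i : Fin d) : eps i * eps i = 1 := by
  unfold eps; split <;> norm_num

lemma mink_apply {d : ℕ} (i j : Fin d) :
    mink d i j = if i = j then eps i else 0 := by
  simp [mink, Matrix.diagonal_apply, eps]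

lemma mink_mul_self {d : ℕ} : mink d * mink d = 1 := by
  unfold mink
  rw [Matrix.diagonal_mul_diagonal]
  convert Matrix.diagonal_one
  rename_i i
  split <;> norm_num

lemma mink_inv {d : ℕ} : (mink d)⁻¹ = mink d :=
  Matrix.inv_eq_right_inv mink_mul_self

lemma sum_mink_mul {d : ℕ} (i : Fin d) (f : Fin d → ℝ) :
    ∑ j, mink d i j * f j = eps i * f i := by
  simp [mink_apply, ite_mul, Finset.sum_ite_eq]

lemma sum_mink_mul' {d : ℕ} (i : Fin d) (f : Fin d → ℝ) :
    ∑ j, mink d j i * f j = eps i * f i := by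
  have : ∀ j, mink d j i = mink d i j := by
    intro j; simp [mink_apply]; split
    · rename_i h; subst h; simp
    · rename_i h; rw [if_neg (fun h' => h h'.symm)]
  simp only [this]; exact sum_mink_mul i f

/-- pder basics -/
lemma pder_congr {d : ℕ} {f g : (Fin d → ℝ) → ℝ} (h : ∀ y, f y = g y) (μ : Fin d)
    (x : Fin d → ℝ) : pder μ f x = pder μ g x := by
  have : f = g := funext h
  rw [this]

lemma pder_const_mul {d : ℕ} {f : (Fin d → ℝ) → ℝ} {x : Fin d → ℝ}
    (hf : DifferentiableAt ℝ f x) (c : ℝ) (μ : Fin d) :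
    pder μ (fun y => c * f y) x = c * pder μ f x := by
  unfold pder
  rw [fderiv_const_mul hf c]
  simp

lemma pder_add {d : ℕ} {f g : (Fin d → ℝ) → ℝ} {x : Fin d → ℝ}
    (hf : DifferentiableAt ℝ f x) (hg : DifferentiableAt ℝ g x) (μ : Fin d) :
    pder μ (fun y => f y + g y) x = pder μ f x + pder μ g x := by
  unfold pder
  rw [fderiv_fun_add hf hg]; simp

lemma pder_sub {d : ℕ} {f g : (Fin d → ℝ) → ℝ} {x : Fin d → ℝ}
    (hf : DifferentiableAt ℝ f x) (hg : DifferentiableAt ℝ g x) (μ : Fin d) :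
    pder μ (fun y => f y - g y) x = pder μ f x - pder μ g x := by
  unfold pder
  rw [fderiv_fun_sub hf hg]; simp

lemma pder_mul {d : ℕ} {f g : (Fin d → ℝ) → ℝ} {x : Fin d → ℝ}
    (hf : DifferentiableAt ℝ f x) (hg : DifferentiableAt ℝ g x) (μ : Fin d) :
    pder μ (fun y => f y * g y) x = pder μ f x * g x + f x * pder μ g x := by
  unfold pder
  rw [fderiv_fun_mul hf hg]
  simp
  ring

lemma pder_sum {d n : ℕ} {f : Fin n → (Fin d → ℝ) → ℝ} {x : Fin d → ℝ}
    (hf : ∀ i, DifferentiableAt ℝ (f i) x) (μ : Fin d) :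
    pder μ (fun y => ∑ i, f i y) x = ∑ i, pder μ (f i) x := by
  unfold pder
  rw [fderiv_fun_sum (fun i _ => hf i)]
  simp

lemma pder_exp {d : ℕ} {f : (Fin d → ℝ) → ℝ} {x : Fin d → ℝ}
    (hf : DifferentiableAt ℝ f x) (μ : Fin d) :
    pder μ (fun y => Real.exp (f y)) x = Real.exp (f x) * pder μ f x := by
  unfold pder
  rw [(hf.hasFDerivAt.exp).fderiv]; simp

lemma pder_comm {d : ℕ} {f : (Fin d → ℝ) → ℝ} (hf : ContDiff ℝ (⊤ : ℕ∞) f)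
    (x : Fin d → ℝ) (a b : Fin d) :
    pder a (fun y => pder b f y) x = pder b (fun y => pder a f y) x := by
  have hd : DifferentiableAt ℝ (fderiv ℝ f) x :=
    ((hf.fderiv_right (m := (⊤:ℕ∞)) (by simp)).differentiable (by simp)).differentiableAt
  have hsym : ∀ v w, fderiv ℝ (fderiv ℝ f) x v w = fderiv ℝ (fderiv ℝ f) x w v :=
    second_derivative_symmetric (fun y => ((hf.differentiable (by simp)) y).hasFDerivAt)
      hd.hasFDerivAt
  have key : ∀ (v : Fin d → ℝ) (c : Fin d),
      pder c (fun y => fderiv ℝ f y v) x = fderiv ℝ (fderiv ℝ f) x (Pi.single c 1) v := by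
    intro v c
    have h1 : HasFDerivAt (fun y => fderiv ℝ f y v)
        ((fderiv ℝ f x).comp (0 : (Fin d → ℝ) →L[ℝ] (Fin d → ℝ)) +
          (fderiv ℝ (fderiv ℝ f) x).flip v) x :=
      hd.hasFDerivAt.clm_apply (hasFDerivAt_const v x)
    unfold pder
    rw [h1.fderiv]
    simp
  have e1 : pder a (fun y => pder b f y) x
      = fderiv ℝ (fderiv ℝ f) x (Pi.single a 1) (Pi.single b 1) := key (Pi.single b 1) a
  have e2 : pder b (fun y => pder a f y) x
      = fderiv ℝ (fderiv ℝ f) x (Pi.single b 1) (Pi.single a 1) := key (Pi.single a 1) b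
  rw [e1, e2, hsym]

lemma contDiff_pder {d : ℕ} {f : (Fin d → ℝ) → ℝ} (hf : ContDiff ℝ (⊤ : ℕ∞) f) (a : Fin d) :
    ContDiff ℝ (⊤ : ℕ∞) fun y => pder a f y :=
  ContDiff.clm_apply (hf.fderiv_right (by simp)) contDiff_const

/-- conversion of sums over `Fin 3 → Fin d` to triple sums -/
lemma sum_fn3 {d : ℕ} (f : (Fin 3 → Fin d) → ℝ) :
    ∑ v : Fin 3 → Fin d, f v = ∑ a, ∑ b, ∑ c, f ![a, b, c] := by
  let e : ((Fin d × Fin d) × Fin d) ≃ (Fin 3 → Fin d) :=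
    { toFun := fun p => ![p.1.1, p.1.2, p.2]
      invFun := fun v => ((v 0, v 1), v 2)
      left_inv := fun p => rfl
      right_inv := fun v => by funext i; fin_cases i <;> rfl }
  rw [← Finset.sum_product', ← Finset.sum_product', ← Equiv.sum_comp e f]
  exact Finset.sum_congr (Finset.univ_product_univ.symm) (fun _ _ => rfl)


lemma sum3_swap01 {d : ℕ} (f : Fin d → Fin d → Fin d → ℝ) :
    (∑ a, ∑ b, ∑ c, f a b c) = ∑ a, ∑ b, ∑ c, f b a c :=
  Finset.sum_comm

lemma sum3_swap02 {d : ℕ} (f : Fin d → Fin d → Fin d → ℝ) :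
    (∑ a, ∑ b, ∑ c, f a b c) = ∑ a, ∑ b, ∑ c, f c b a :=
  calc (∑ a, ∑ b, ∑ c, f a b c)
      = ∑ a, ∑ c, ∑ b, f a b c := Finset.sum_congr rfl (fun a _ => Finset.sum_comm)
    _ = ∑ c, ∑ a, ∑ b, f a b c := Finset.sum_comm
    _ = ∑ c, ∑ b, ∑ a, f a b c := Finset.sum_congr rfl (fun c _ => Finset.sum_comm)

lemma alt_swap01 {d : ℕ} {ω : Tensor d 3} (hω : IsAlt ω) (a b c : Fin d) :
    ω ![b, a, c] = -ω ![a, b, c] := by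
  have h := hω ![a, b, c] (Equiv.swap 0 1)
  have hv : ![a, b, c] ∘ (Equiv.swap (0:Fin 3) 1) = ![b, a, c] := by
    funext i; fin_cases i <;> simp [Equiv.swap_apply_def] <;> rfl
  have hs : Equiv.Perm.sign (Equiv.swap (0:Fin 3) 1) = -1 :=
    Equiv.Perm.sign_swap (by decide)
  rw [hv, hs] at h
  simpa using h

lemma alt_swap02 {d : ℕ} {ω : Tensor d 3} (hω : IsAlt ω) (a b c : Fin d) :
    ω ![c, b, a] = -ω ![a, b, c] := by
  have h := hω ![a, b, c] (Equiv.swap 0 2)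
  have hv : ![a, b, c] ∘ (Equiv.swap (0:Fin 3) 2) = ![c, b, a] := by
    funext i; fin_cases i <;> simp [Equiv.swap_apply_def] <;> rfl
  have hs : Equiv.Perm.sign (Equiv.swap (0:Fin 3) 2) = -1 :=
    Equiv.Perm.sign_swap (by decide)
  rw [hv, hs] at h
  simpa using h

lemma alt_swap12 {d : ℕ} {ω : Tensor d 3} (hω : IsAlt ω) (a b c : Fin d) :
    ω ![a, c, b] = -ω ![a, b, c] := by
  have h := hω ![a, b, c] (Equiv.swap 1 2)
  have hv : ![a, b, c] ∘ (Equiv.swap (1:Fin 3) 2) = ![a, c, b] := by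
    funext i; fin_cases i <;> simp [Equiv.swap_apply_def] <;> rfl
  have hs : Equiv.Perm.sign (Equiv.swap (1:Fin 3) 2) = -1 :=
    Equiv.Perm.sign_swap (by decide)
  rw [hv, hs] at h
  simpa using h

lemma alt_cyc {d : ℕ} {ω : Tensor d 3} (hω : IsAlt ω) (a b c : Fin d) :
    ω ![c, a, b] = ω ![a, b, c] := by
  rw [show ω ![c, a, b] = -ω ![c, b, a] from alt_swap12 hω c b a, alt_swap02 hω a b c]
  ring


lemma pder_neg {d : ℕ} {f : (Fin d → ℝ) → ℝ} {x : Fin d → ℝ}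
    (hf : DifferentiableAt ℝ f x) (μ : Fin d) :
    pder μ (fun y => -(f y)) x = -pder μ f x := by
  unfold pder
  rw [fderiv_fun_neg]
  simp

lemma sum_rot {d : ℕ} (f : Fin d → Fin d → Fin d → ℝ) :
    (∑ a, ∑ b, ∑ c, f a b c) = ∑ b, ∑ c, ∑ a, f a b c := by
  rw [Finset.sum_comm]
  exact Finset.sum_congr rfl fun b _ => Finset.sum_comm

lemma oneNormSq_mink {d : ℕ} (α : Fin d → ℝ) :
    oneNormSq (mink d) α = ∑ b, eps b * (α b * α b) := by
  unfold oneNormSq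
  simp [mink_apply, ite_mul, Finset.sum_ite_eq, mul_assoc]

lemma prod_mink {d : ℕ} (v w : Fin 3 → Fin d) :
    (∏ i, mink d (v i) (w i)) = if v = w then eps (v 0) * eps (v 1) * eps (v 2) else 0 := by
  by_cases h : v = w
  · subst h
    simp [mink_apply, Fin.prod_univ_three]
  · rw [if_neg h]
    obtain ⟨i, hi⟩ := Function.ne_iff.mp h
    exact Finset.prod_eq_zero (Finset.mem_univ i) (by rw [mink_apply, if_neg hi])

lemma normSq_mink {d : ℕ} (ω : Tensor d 3) :
    normSq (mink d) ω = ∑ a, ∑ b, ∑ c, eps a * eps b * eps c * (ω ![a,b,c] * ω ![a,b,c]) := by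
  unfold normSq
  have : ∀ v : Fin 3 → Fin d, (∑ w, (∏ i, mink d (v i) (w i)) * ω v * ω w)
      = eps (v 0) * eps (v 1) * eps (v 2) * (ω v * ω v) := by
    intro v
    simp [prod_mink, ite_mul, Finset.sum_ite_eq, mul_assoc]
  rw [Finset.sum_congr rfl fun v _ => this v, sum_fn3]
  simp

lemma Hsq_mink {d : ℕ} (ω : Tensor d 3) (μ ρ : Fin d) :
    Hsq (mink d) ω μ ρ = ∑ b, ∑ c, eps b * eps c * (ω ![μ,b,c] * ω ![ρ,b,c]) := by
  show (∑ κ, ∑ l, ∑ o, ∑ p,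
      mink d κ l * mink d o p * ω ![μ, κ, o] * ω ![ρ, l, p]) = _
  simp only [mink_apply, ite_mul, zero_mul, mul_ite, mul_zero, Finset.sum_ite_irrel,
    Finset.sum_ite_eq, Finset.mem_univ, if_true, Finset.sum_const_zero]
  apply Finset.sum_congr rfl; intro b _
  apply Finset.sum_congr rfl; intro c _
  ring



lemma pder_cmul_mul {d : ℕ} {f g : (Fin d → ℝ) → ℝ} {x : Fin d → ℝ}
    (hf : DifferentiableAt ℝ f x) (hg : DifferentiableAt ℝ g x) (c : ℝ) (μ : Fin d) :
    pder μ (fun y => c * (f y * g y)) x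
      = c * (pder μ f x * g x + f x * pder μ g x) := by
  rw [pder_const_mul (hf.fun_mul hg) c, pder_mul hf hg]

lemma pder_comb {d : ℕ} {f1 f2 f3 f4 : (Fin d → ℝ) → ℝ} {x : Fin d → ℝ}
    (h1 : DifferentiableAt ℝ f1 x) (h2 : DifferentiableAt ℝ f2 x)
    (h3 : DifferentiableAt ℝ f3 x) (h4 : DifferentiableAt ℝ f4 x) (μ : Fin d) :
    pder μ (fun y => f1 y - f2 y + f3 y - f4 y) x
      = pder μ f1 x - pder μ f2 x + pder μ f3 x - pder μ f4 x := by
  rw [pder_sub ((h1.fun_sub h2).fun_add h3) h4, pder_add (h1.fun_sub h2) h3, pder_sub h1 h2]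

lemma pder_expneg {d : ℕ} {f : (Fin d → ℝ) → ℝ} {x : Fin d → ℝ}
    (hf : DifferentiableAt ℝ f x) (c : ℝ) (μ : Fin d) :
    pder μ (fun y => Real.exp (-(c * f y))) x
      = Real.exp (-(c * f x)) * (-(c * pder μ f x)) := by
  rw [pder_exp ((hf.const_mul c).fun_neg), pder_neg (hf.const_mul c), pder_const_mul hf c]

lemma sum_eps_mink {d : ℕ} (ρ : Fin d) (F : Fin d → ℝ) :
    ∑ μ, eps μ * mink d μ ρ * F μ = F ρ := by
  simp only [mink_apply, mul_ite, mul_zero, ite_mul, zero_mul, Finset.sum_ite_eq',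
    Finset.mem_univ, if_true]
  rw [eps_mul_self, one_mul]

lemma mul_sum3 {d : ℕ} (c : ℝ) (f : Fin d → Fin d → Fin d → ℝ) :
    c * (∑ a, ∑ b, ∑ e, f a b e) = ∑ a, ∑ b, ∑ e, c * f a b e := by
  simp [Finset.mul_sum]

/-- flat-background energy-momentum conservation: on `ℝ^d`
(`d ≥ 3`, `κ := 1/(d−2)`) with the constant Minkowski metric
`η = diag(−1,1,…,1)`, let `φ` be a smooth scalar field, `H` a smooth closed
field of alternating 3-forms, and `ξ := dφ` (so `ξ_μ = ∂_μ φ`).  Assume the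
Einstein-frame `H`-field equation `∂^μ H_{μνλ} = (4/(d−2))·ξ^μ H_{μνλ}` and the
Einstein-frame dilaton equation `∂^μ∂_μ φ = −(e^{−4κφ}/6)·|H|²_η`.  Then the
energy-momentum tensor
`T := (1/(d−2))·[ξ⊗ξ − (|ξ|²_η/2)·η] + (e^{−4κφ}/4)·[H² − (|H|²_η/6)·η]`
is divergence-free: `∂^μ T_{μν} = 0` for every `ν`. -/
theorem flat_energy_momentum_conservation {d : ℕ} (hd : 3 ≤ d)
    (φ : (Fin d → ℝ) → ℝ) (hφ : ContDiff ℝ (⊤ : ℕ∞) φ)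
    (H : (Fin d → ℝ) → Tensor d 3)
    (hHsmooth : ∀ v : Fin 3 → Fin d, ContDiff ℝ (⊤ : ℕ∞) fun x => H x v)
    (halt : ∀ x, IsAlt (H x))
    (hclosed : ∀ (x : Fin d → ℝ) (a b c e : Fin d),
      pder a (fun y => H y ![b, c, e]) x - pder b (fun y => H y ![a, c, e]) x
        + pder c (fun y => H y ![a, b, e]) x - pder e (fun y => H y ![a, b, c]) x = 0)
    -- the Einstein-frame H-field equation `∂^μ H_{μνλ} = (4/(d−2))·ξ^μ H_{μνλ}`:
    (hHeq : ∀ (x : Fin d → ℝ) (ν l : Fin d),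
      (∑ μ, ∑ σ, (mink d)⁻¹ μ σ * pder σ (fun y => H y ![μ, ν, l]) x)
        = (4 / ((d : ℝ) - 2)) * ∑ μ, ∑ σ, (mink d)⁻¹ μ σ * pder σ φ x * H x ![μ, ν, l])
    -- the Einstein-frame dilaton equation `∂^μ∂_μ φ = −(e^{−4κφ}/6)·|H|²_η`:
    (hdil : ∀ x : Fin d → ℝ,
      (∑ μ, ∑ σ, (mink d)⁻¹ μ σ * pder σ (fun y => pder μ φ y) x)
        = -(Real.exp (-(4 * ((d : ℝ) - 2)⁻¹ * φ x)) / 6) * normSq (mink d)⁻¹ (H x)) :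
    -- conclusion: `∂^μ T_{μν} = 0`
    let T : (Fin d → ℝ) → Matrix (Fin d) (Fin d) ℝ := fun y =>
      (((d : ℝ) - 2)⁻¹) •
          (Matrix.vecMulVec (fun a => pder a φ y) (fun a => pder a φ y)
            - (oneNormSq (mink d)⁻¹ (fun a => pder a φ y) / 2) • mink d)
        + (Real.exp (-(4 * ((d : ℝ) - 2)⁻¹ * φ y)) / 4) •
            (Hsq (mink d)⁻¹ (H y) - (normSq (mink d)⁻¹ (H y) / 6) • mink d)
    ∀ (x : Fin d → ℝ) (ν : Fin d),
      (∑ μ, ∑ σ, (mink d)⁻¹ μ σ * pder σ (fun y => T y μ ν) x) = 0 := by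
  intro T x ν
  have hd2 : ((d:ℝ) - 2) ≠ 0 := by
    have h3 : (3:ℝ) ≤ (d:ℝ) := by exact_mod_cast hd
    linarith
  -- differentiability registry
  have dφ : ∀ y, DifferentiableAt ℝ φ y := fun y =>
    (hφ.differentiable (by simp)).differentiableAt
  have dξ : ∀ (a : Fin d) (y : Fin d → ℝ), DifferentiableAt ℝ (fun z => pder a φ z) y :=
    fun a y => ((contDiff_pder hφ a).differentiable (by simp)).differentiableAt
  have dH : ∀ (v : Fin 3 → Fin d) (y : Fin d → ℝ), DifferentiableAt ℝ (fun z => H z v) y :=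
    fun v y => ((hHsmooth v).differentiable (by simp)).differentiableAt
  have dE : ∀ y, DifferentiableAt ℝ
      (fun z => Real.exp (-(4 * ((d:ℝ)-2)⁻¹ * φ z))) y :=
    fun y => (((dφ y).const_mul (4 * ((d:ℝ)-2)⁻¹)).neg).exp
  have dQ : ∀ y, DifferentiableAt ℝ (fun z => ∑ b, eps b * (pder b φ z * pder b φ z)) y :=
    fun y => DifferentiableAt.fun_sum (fun b _ => ((dξ b y).fun_mul (dξ b y)).const_mul (eps b))
  have dS : ∀ (μ ρ : Fin d) (y : Fin d → ℝ), DifferentiableAt ℝ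
      (fun z => ∑ b, ∑ c, eps b * eps c * (H z ![μ,b,c] * H z ![ρ,b,c])) y :=
    fun μ ρ y => DifferentiableAt.fun_sum fun b _ => DifferentiableAt.fun_sum fun c _ =>
      ((dH _ y).fun_mul (dH _ y)).const_mul _
  have dN : ∀ y, DifferentiableAt ℝ
      (fun z => ∑ a, ∑ b, ∑ c, eps a * eps b * eps c * (H z ![a,b,c] * H z ![a,b,c])) y :=
    fun y => DifferentiableAt.fun_sum fun a _ => DifferentiableAt.fun_sum fun b _ =>
      DifferentiableAt.fun_sum fun c _ => ((dH _ y).fun_mul (dH _ y)).const_mul _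
  -- entry formula for T
  have hT : ∀ (y : Fin d → ℝ) (μ : Fin d), T y μ ν =
      ((d:ℝ)-2)⁻¹ * (pder μ φ y * pder ν φ y)
      - ((d:ℝ)-2)⁻¹ / 2 * mink d μ ν * (∑ b, eps b * (pder b φ y * pder b φ y))
      + (1/4 : ℝ) * (Real.exp (-(4 * ((d:ℝ)-2)⁻¹ * φ y)) *
          (∑ b, ∑ c, eps b * eps c * (H y ![μ,b,c] * H y ![ν,b,c])))
      - mink d μ ν / 24 * (Real.exp (-(4 * ((d:ℝ)-2)⁻¹ * φ y)) *
          (∑ a, ∑ b, ∑ c, eps a * eps b * eps c * (H y ![a,b,c] * H y ![a,b,c]))) := by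
    intro y μ
    simp only [T, Matrix.add_apply, Matrix.sub_apply, Matrix.smul_apply,
      Matrix.vecMulVec_apply, smul_eq_mul, mink_inv, oneNormSq_mink, normSq_mink, Hsq_mink]
    ring
  -- derivatives of the scalar building blocks
  have pQ : ∀ μ : Fin d, pder μ (fun z => ∑ b, eps b * (pder b φ z * pder b φ z)) x
      = ∑ b, eps b * (pder μ (fun y => pder b φ y) x * pder b φ x
          + pder b φ x * pder μ (fun y => pder b φ y) x) :=
    fun μ => (pder_sum (f := fun b => fun z => eps b * (pder b φ z * pder b φ z))
        (fun b => ((dξ b x).fun_mul (dξ b x)).const_mul (eps b)) μ).trans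
      (Finset.sum_congr rfl fun b _ => pder_cmul_mul (dξ b x) (dξ b x) (eps b) μ)
  have pS : ∀ μ ρ : Fin d,
      pder μ (fun z => ∑ b, ∑ c, eps b * eps c * (H z ![ρ,b,c] * H z ![ν,b,c])) x
      = ∑ b, ∑ c, eps b * eps c * (pder μ (fun y => H y ![ρ,b,c]) x * H x ![ν,b,c]
          + H x ![ρ,b,c] * pder μ (fun y => H y ![ν,b,c]) x) :=
    fun μ ρ => (pder_sum
        (f := fun b => fun z => ∑ c, eps b * eps c * (H z ![ρ,b,c] * H z ![ν,b,c]))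
        (fun b => DifferentiableAt.fun_sum fun c _ => ((dH _ x).fun_mul (dH _ x)).const_mul _) μ).trans
      (Finset.sum_congr rfl fun b _ => (pder_sum
          (f := fun c => fun z => eps b * eps c * (H z ![ρ,b,c] * H z ![ν,b,c]))
          (fun c => ((dH _ x).fun_mul (dH _ x)).const_mul _) μ).trans
        (Finset.sum_congr rfl fun c _ => pder_cmul_mul (dH _ x) (dH _ x) (eps b * eps c) μ))
  have pN : ∀ μ : Fin d,
      pder μ (fun z => ∑ a, ∑ b, ∑ c, eps a * eps b * eps c * (H z ![a,b,c] * H z ![a,b,c])) x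
      = ∑ a, ∑ b, ∑ c, eps a * eps b * eps c * (pder μ (fun y => H y ![a,b,c]) x * H x ![a,b,c]
          + H x ![a,b,c] * pder μ (fun y => H y ![a,b,c]) x) :=
    fun μ => (pder_sum
        (f := fun a => fun z => ∑ b, ∑ c, eps a * eps b * eps c * (H z ![a,b,c] * H z ![a,b,c]))
        (fun a => DifferentiableAt.fun_sum fun b _ => DifferentiableAt.fun_sum fun c _ =>
          ((dH _ x).fun_mul (dH _ x)).const_mul _) μ).trans
      (Finset.sum_congr rfl fun a _ => (pder_sum
          (f := fun b => fun z => ∑ c, eps a * eps b * eps c * (H z ![a,b,c] * H z ![a,b,c]))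
          (fun b => DifferentiableAt.fun_sum fun c _ => ((dH _ x).fun_mul (dH _ x)).const_mul _) μ).trans
        (Finset.sum_congr rfl fun b _ => (pder_sum
            (f := fun c => fun z => eps a * eps b * eps c * (H z ![a,b,c] * H z ![a,b,c]))
            (fun c => ((dH _ x).fun_mul (dH _ x)).const_mul _) μ).trans
          (Finset.sum_congr rfl fun c _ =>
            pder_cmul_mul (dH _ x) (dH _ x) (eps a * eps b * eps c) μ)))
  -- the derivative of the T-entry
  have hpT : ∀ μ : Fin d, pder μ (fun y => T y μ ν) x =
      ((d:ℝ)-2)⁻¹ * (pder μ (fun y => pder μ φ y) x * pder ν φ x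
        + pder μ φ x * pder μ (fun y => pder ν φ y) x)
      - ((d:ℝ)-2)⁻¹ / 2 * mink d μ ν * (∑ b, eps b * (pder μ (fun y => pder b φ y) x * pder b φ x
          + pder b φ x * pder μ (fun y => pder b φ y) x))
      + (1/4 : ℝ) * ((Real.exp (-(4 * ((d:ℝ)-2)⁻¹ * φ x)) * (-(4 * ((d:ℝ)-2)⁻¹ * pder μ φ x)))
            * (∑ b, ∑ c, eps b * eps c * (H x ![μ,b,c] * H x ![ν,b,c]))
          + Real.exp (-(4 * ((d:ℝ)-2)⁻¹ * φ x)) *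
            (∑ b, ∑ c, eps b * eps c * (pder μ (fun y => H y ![μ,b,c]) x * H x ![ν,b,c]
              + H x ![μ,b,c] * pder μ (fun y => H y ![ν,b,c]) x)))
      - mink d μ ν / 24 * ((Real.exp (-(4 * ((d:ℝ)-2)⁻¹ * φ x)) * (-(4 * ((d:ℝ)-2)⁻¹ * pder μ φ x)))
            * (∑ a, ∑ b, ∑ c, eps a * eps b * eps c * (H x ![a,b,c] * H x ![a,b,c]))
          + Real.exp (-(4 * ((d:ℝ)-2)⁻¹ * φ x)) *
            (∑ a, ∑ b, ∑ c, eps a * eps b * eps c * (pder μ (fun y => H y ![a,b,c]) x * H x ![a,b,c]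
              + H x ![a,b,c] * pder μ (fun y => H y ![a,b,c]) x))) := by
    intro μ
    rw [pder_congr (fun y => hT y μ) μ x]
    rw [pder_comb (((dξ μ x).fun_mul (dξ ν x)).const_mul _) ((dQ x).const_mul _)
      (((dE x).fun_mul (dS μ ν x)).const_mul _) (((dE x).fun_mul (dN x)).const_mul _) μ]
    rw [pder_cmul_mul (dξ μ x) (dξ ν x) (((d:ℝ)-2)⁻¹) μ]
    rw [pder_const_mul (dQ x) (((d:ℝ)-2)⁻¹ / 2 * mink d μ ν) μ]
    rw [pder_cmul_mul (dE x) (dS μ ν x) (1/4 : ℝ) μ]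
    rw [pder_cmul_mul (dE x) (dN x) (mink d μ ν / 24) μ]
    rw [pQ μ, pS μ μ, pN μ, pder_expneg (dφ x) (4 * ((d:ℝ)-2)⁻¹) μ]
  -- collapsed field equations
  have hdil' : ∑ μ, eps μ * pder μ (fun y => pder μ φ y) x
      = -(Real.exp (-(4 * ((d:ℝ)-2)⁻¹ * φ x)) / 6) *
        (∑ a, ∑ b, ∑ c, eps a * eps b * eps c * (H x ![a,b,c] * H x ![a,b,c])) := by
    have h0 := hdil x
    rw [mink_inv, normSq_mink] at h0
    calc ∑ μ, eps μ * pder μ (fun y => pder μ φ y) x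
        = ∑ μ, ∑ σ, mink d μ σ * pder σ (fun y => pder μ φ y) x :=
          Finset.sum_congr rfl fun μ _ =>
            (sum_mink_mul μ (fun σ => pder σ (fun y => pder μ φ y) x)).symm
      _ = _ := h0
  have hHeq' : ∀ b c : Fin d, ∑ μ, eps μ * pder μ (fun y => H y ![μ,b,c]) x
      = 4 * ((d:ℝ)-2)⁻¹ * ∑ μ, eps μ * (pder μ φ x * H x ![μ,b,c]) := by
    intro b c
    have h0 := hHeq x b c
    rw [mink_inv] at h0
    calc ∑ μ, eps μ * pder μ (fun y => H y ![μ,b,c]) x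
        = ∑ μ, ∑ σ, mink d μ σ * pder σ (fun y => H y ![μ,b,c]) x :=
          Finset.sum_congr rfl fun μ _ =>
            (sum_mink_mul μ (fun σ => pder σ (fun y => H y ![μ,b,c]) x)).symm
      _ = (4 / ((d:ℝ)-2)) * ∑ μ, ∑ σ, mink d μ σ * pder σ φ x * H x ![μ,b,c] := h0
      _ = 4 * ((d:ℝ)-2)⁻¹ * ∑ μ, eps μ * (pder μ φ x * H x ![μ,b,c]) := by
          rw [div_eq_mul_inv]
          congr 1
          refine Finset.sum_congr rfl fun μ _ => ?_
          simp only [mul_assoc]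
          exact sum_mink_mul μ _
  have Dsym : ∀ a b : Fin d,
      pder a (fun y => pder b φ y) x = pder b (fun y => pder a φ y) x :=
    fun a b => pder_comm hφ x a b
  have h3sw01 : ∀ (a p q r : Fin d),
      pder a (fun y => H y ![q,p,r]) x = -pder a (fun y => H y ![p,q,r]) x := by
    intro a p q r
    rw [pder_congr (fun y => alt_swap01 (halt y) p q r) a x, pder_neg (dH _ x)]
  have h3cyc : ∀ (a p q r : Fin d),
      pder a (fun y => H y ![r,p,q]) x = pder a (fun y => H y ![p,q,r]) x :=
    fun a p q r => pder_congr (fun y => alt_cyc (halt y) p q r) a x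
  have hsplit : ∀ a b c : Fin d, pder a (fun y => H y ![ν,b,c]) x
      = pder ν (fun y => H y ![a,b,c]) x - pder b (fun y => H y ![a,ν,c]) x
        + pder c (fun y => H y ![a,ν,b]) x := by
    intro a b c
    have h0 := hclosed x a ν b c
    linarith
  -- the closedness identity 3B = P
  have key3B : 3 * (∑ a, ∑ b, ∑ c, eps a * eps b * eps c *
        (H x ![a,b,c] * pder a (fun y => H y ![ν,b,c]) x))
      = ∑ a, ∑ b, ∑ c, eps a * eps b * eps c *
        (pder ν (fun y => H y ![a,b,c]) x * H x ![a,b,c]) := by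
    have hB2 : (∑ a, ∑ b, ∑ c, eps a * eps b * eps c *
          (H x ![a,b,c] * pder b (fun y => H y ![a,ν,c]) x))
        = ∑ a, ∑ b, ∑ c, eps a * eps b * eps c *
          (H x ![a,b,c] * pder a (fun y => H y ![ν,b,c]) x) := by
      rw [sum3_swap01 (fun a b c => eps a * eps b * eps c *
        (H x ![a,b,c] * pder b (fun y => H y ![a,ν,c]) x))]
      refine Finset.sum_congr rfl fun a _ => Finset.sum_congr rfl fun b _ =>
        Finset.sum_congr rfl fun c _ => ?_
      rw [alt_swap01 (halt x) a b c, h3sw01 a ν b c]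
      ring
    have hB3 : (∑ a, ∑ b, ∑ c, eps a * eps b * eps c *
          (H x ![a,b,c] * pder c (fun y => H y ![a,ν,b]) x))
        = -∑ a, ∑ b, ∑ c, eps a * eps b * eps c *
          (H x ![a,b,c] * pder a (fun y => H y ![ν,b,c]) x) := by
      rw [sum3_swap02 (fun a b c => eps a * eps b * eps c *
        (H x ![a,b,c] * pder c (fun y => H y ![a,ν,b]) x))]
      rw [← Finset.sum_neg_distrib]
      refine Finset.sum_congr rfl fun a _ => ?_
      rw [← Finset.sum_neg_distrib]
      refine Finset.sum_congr rfl fun b _ => ?_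
      rw [← Finset.sum_neg_distrib]
      refine Finset.sum_congr rfl fun c _ => ?_
      rw [alt_swap02 (halt x) a b c, h3cyc a ν b c]
      ring
    have hBc : (∑ a, ∑ b, ∑ c, eps a * eps b * eps c *
          (H x ![a,b,c] * pder a (fun y => H y ![ν,b,c]) x))
        = (∑ a, ∑ b, ∑ c, eps a * eps b * eps c *
            (pder ν (fun y => H y ![a,b,c]) x * H x ![a,b,c]))
          - (∑ a, ∑ b, ∑ c, eps a * eps b * eps c *
            (H x ![a,b,c] * pder b (fun y => H y ![a,ν,c]) x))
          + (∑ a, ∑ b, ∑ c, eps a * eps b * eps c *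
            (H x ![a,b,c] * pder c (fun y => H y ![a,ν,b]) x)) := by
      rw [← Finset.sum_sub_distrib, ← Finset.sum_add_distrib]
      refine Finset.sum_congr rfl fun a _ => ?_
      rw [← Finset.sum_sub_distrib, ← Finset.sum_add_distrib]
      refine Finset.sum_congr rfl fun b _ => ?_
      rw [← Finset.sum_sub_distrib, ← Finset.sum_add_distrib]
      refine Finset.sum_congr rfl fun c _ => ?_
      rw [hsplit a b c]
      ring
    linarith
  -- auxiliary pull-in lemma
  have mul_sum2 : ∀ (c : ℝ) (f : Fin d → Fin d → ℝ),
      c * (∑ a, ∑ b, f a b) = ∑ a, ∑ b, c * f a b := by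
    intro c f; simp [Finset.mul_sum]
  -- U-identity: the H-field equation part
  have gU : (∑ μ, eps μ * (∑ b, ∑ c, eps b * eps c *
        (pder μ (fun y => H y ![μ,b,c]) x * H x ![ν,b,c]
          + H x ![μ,b,c] * pder μ (fun y => H y ![ν,b,c]) x)))
      = 4 * ((d:ℝ)-2)⁻¹ * (∑ μ, eps μ * (pder μ φ x *
          (∑ b, ∑ c, eps b * eps c * (H x ![μ,b,c] * H x ![ν,b,c]))))
        + (∑ a, ∑ b, ∑ c, eps a * eps b * eps c *
          (H x ![a,b,c] * pder a (fun y => H y ![ν,b,c]) x)) := by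
    have stepa : ∀ μ : Fin d, eps μ * (∑ b, ∑ c, eps b * eps c *
          (pder μ (fun y => H y ![μ,b,c]) x * H x ![ν,b,c]
            + H x ![μ,b,c] * pder μ (fun y => H y ![ν,b,c]) x))
        = ∑ b, ∑ c, (eps μ * eps b * eps c *
            (pder μ (fun y => H y ![μ,b,c]) x * H x ![ν,b,c])
          + eps μ * eps b * eps c *
            (H x ![μ,b,c] * pder μ (fun y => H y ![ν,b,c]) x)) := by
      intro μ
      rw [Finset.mul_sum]
      refine Finset.sum_congr rfl fun b _ => ?_
      rw [Finset.mul_sum]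
      exact Finset.sum_congr rfl fun c _ => by ring
    have split : (∑ μ, eps μ * (∑ b, ∑ c, eps b * eps c *
          (pder μ (fun y => H y ![μ,b,c]) x * H x ![ν,b,c]
            + H x ![μ,b,c] * pder μ (fun y => H y ![ν,b,c]) x)))
        = (∑ μ, ∑ b, ∑ c, eps μ * eps b * eps c *
            (pder μ (fun y => H y ![μ,b,c]) x * H x ![ν,b,c]))
          + (∑ μ, ∑ b, ∑ c, eps μ * eps b * eps c *
            (H x ![μ,b,c] * pder μ (fun y => H y ![ν,b,c]) x)) := by
      calc _ = ∑ μ : Fin d, ∑ b, ∑ c, (eps μ * eps b * eps c *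
            (pder μ (fun y => H y ![μ,b,c]) x * H x ![ν,b,c])
          + eps μ * eps b * eps c *
            (H x ![μ,b,c] * pder μ (fun y => H y ![ν,b,c]) x)) :=
            Finset.sum_congr rfl fun μ _ => stepa μ
        _ = _ := by simp only [Finset.sum_add_distrib]
    rw [split]
    congr 1
    rw [sum_rot (fun μ b c => eps μ * eps b * eps c *
      (pder μ (fun y => H y ![μ,b,c]) x * H x ![ν,b,c]))]
    have step1 : ∀ b c : Fin d, (∑ μ, eps μ * eps b * eps c *
          (pder μ (fun y => H y ![μ,b,c]) x * H x ![ν,b,c]))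
        = eps b * eps c * H x ![ν,b,c] *
          (4 * ((d:ℝ)-2)⁻¹ * ∑ μ, eps μ * (pder μ φ x * H x ![μ,b,c])) := by
      intro b c
      rw [← hHeq' b c, Finset.mul_sum]
      exact Finset.sum_congr rfl fun μ _ => by ring
    rw [Finset.sum_congr rfl fun b _ => Finset.sum_congr rfl fun c _ => step1 b c]
    have can : ∀ b c : Fin d, eps b * eps c * H x ![ν,b,c] *
          (4 * ((d:ℝ)-2)⁻¹ * ∑ μ, eps μ * (pder μ φ x * H x ![μ,b,c]))
        = ∑ μ, 4 * ((d:ℝ)-2)⁻¹ * (eps b * eps c * (eps μ *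
            (pder μ φ x * (H x ![μ,b,c] * H x ![ν,b,c])))) := by
      intro b c
      rw [Finset.mul_sum, Finset.mul_sum]
      exact Finset.sum_congr rfl fun μ _ => by ring
    rw [Finset.sum_congr rfl fun b _ => Finset.sum_congr rfl fun c _ => can b c]
    rw [Finset.mul_sum]
    have can2 : ∀ μ : Fin d, 4 * ((d:ℝ)-2)⁻¹ * (eps μ * (pder μ φ x *
          (∑ b, ∑ c, eps b * eps c * (H x ![μ,b,c] * H x ![ν,b,c]))))
        = ∑ b, ∑ c, 4 * ((d:ℝ)-2)⁻¹ * (eps b * eps c * (eps μ *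
            (pder μ φ x * (H x ![μ,b,c] * H x ![ν,b,c])))) := by
      intro μ
      rw [show 4 * ((d:ℝ)-2)⁻¹ * (eps μ * (pder μ φ x *
          (∑ b, ∑ c, eps b * eps c * (H x ![μ,b,c] * H x ![ν,b,c]))))
        = (4 * ((d:ℝ)-2)⁻¹ * (eps μ * pder μ φ x)) *
          (∑ b, ∑ c, eps b * eps c * (H x ![μ,b,c] * H x ![ν,b,c])) from by ring,
        mul_sum2]
      exact Finset.sum_congr rfl fun b _ => Finset.sum_congr rfl fun c _ => by ring
    rw [Finset.sum_congr rfl fun μ _ => can2 μ]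
    rw [sum_rot, sum_rot]

  -- remaining pointwise aggregates
  have gW : (∑ μ, eps μ * (pder μ φ x * pder μ (fun y => pder ν φ y) x))
      = ∑ b, eps b * (pder b φ x * pder ν (fun y => pder b φ y) x) :=
    Finset.sum_congr rfl fun b _ => by rw [Dsym b ν]
  have gQ : (∑ b, eps b * (pder ν (fun y => pder b φ y) x * pder b φ x
        + pder b φ x * pder ν (fun y => pder b φ y) x))
      = 2 * ∑ b, eps b * (pder b φ x * pder ν (fun y => pder b φ y) x) := by
    rw [Finset.mul_sum]
    exact Finset.sum_congr rfl fun b _ => by ring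
  have hNd : (∑ a, ∑ b, ∑ c, eps a * eps b * eps c *
        (pder ν (fun y => H y ![a,b,c]) x * H x ![a,b,c]
          + H x ![a,b,c] * pder ν (fun y => H y ![a,b,c]) x))
      = 2 * ∑ a, ∑ b, ∑ c, eps a * eps b * eps c *
        (pder ν (fun y => H y ![a,b,c]) x * H x ![a,b,c]) := by
    rw [mul_sum3]
    exact Finset.sum_congr rfl fun a _ => Finset.sum_congr rfl fun b _ =>
      Finset.sum_congr rfl fun c _ => by ring
  -- assemble
  have e1 : (∑ μ, ∑ σ, (mink d)⁻¹ μ σ * pder σ (fun y => T y μ ν) x)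
      = ∑ μ, eps μ * pder μ (fun y => T y μ ν) x := by
    rw [mink_inv]
    exact Finset.sum_congr rfl fun μ _ =>
      sum_mink_mul μ (fun σ => pder σ (fun y => T y μ ν) x)
  rw [e1]
  have e3 : (∑ μ, eps μ * pder μ (fun y => T y μ ν) x)
      = (((d:ℝ)-2)⁻¹ * pder ν φ x) * (∑ μ, eps μ * pder μ (fun y => pder μ φ y) x)
        + ((d:ℝ)-2)⁻¹ * (∑ μ, eps μ * (pder μ φ x * pder μ (fun y => pder ν φ y) x))
        - (∑ μ, eps μ * mink d μ ν * (((d:ℝ)-2)⁻¹ / 2 *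
            (∑ b, eps b * (pder μ (fun y => pder b φ y) x * pder b φ x
              + pder b φ x * pder μ (fun y => pder b φ y) x))))
        + (-(((d:ℝ)-2)⁻¹ * Real.exp (-(4 * ((d:ℝ)-2)⁻¹ * φ x)))) *
            (∑ μ, eps μ * (pder μ φ x *
              (∑ b, ∑ c, eps b * eps c * (H x ![μ,b,c] * H x ![ν,b,c]))))
        + (Real.exp (-(4 * ((d:ℝ)-2)⁻¹ * φ x)) / 4) *
            (∑ μ, eps μ * (∑ b, ∑ c, eps b * eps c *
              (pder μ (fun y => H y ![μ,b,c]) x * H x ![ν,b,c]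
                + H x ![μ,b,c] * pder μ (fun y => H y ![ν,b,c]) x)))
        - (∑ μ, eps μ * mink d μ ν * (Real.exp (-(4 * ((d:ℝ)-2)⁻¹ * φ x)) *
            (-(4 * ((d:ℝ)-2)⁻¹ * pder μ φ x)) *
            (∑ a, ∑ b, ∑ c, eps a * eps b * eps c * (H x ![a,b,c] * H x ![a,b,c])) / 24))
        - (∑ μ, eps μ * mink d μ ν * (Real.exp (-(4 * ((d:ℝ)-2)⁻¹ * φ x)) / 24 *
            (∑ a, ∑ b, ∑ c, eps a * eps b * eps c *
              (pder μ (fun y => H y ![a,b,c]) x * H x ![a,b,c]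
                + H x ![a,b,c] * pder μ (fun y => H y ![a,b,c]) x)))) := by
    simp only [hpT]
    conv_rhs => rw [Finset.mul_sum, Finset.mul_sum, Finset.mul_sum, Finset.mul_sum]
    rw [← Finset.sum_add_distrib, ← Finset.sum_sub_distrib, ← Finset.sum_add_distrib,
      ← Finset.sum_add_distrib, ← Finset.sum_sub_distrib, ← Finset.sum_sub_distrib]
    exact Finset.sum_congr rfl fun μ _ => by ring
  rw [e3, hdil', gW, gU]
  rw [sum_eps_mink ν (fun μ => ((d:ℝ)-2)⁻¹ / 2 *
      (∑ b, eps b * (pder μ (fun y => pder b φ y) x * pder b φ x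
        + pder b φ x * pder μ (fun y => pder b φ y) x)))]
  rw [sum_eps_mink ν (fun μ => Real.exp (-(4 * ((d:ℝ)-2)⁻¹ * φ x)) *
      (-(4 * ((d:ℝ)-2)⁻¹ * pder μ φ x)) *
      (∑ a, ∑ b, ∑ c, eps a * eps b * eps c * (H x ![a,b,c] * H x ![a,b,c])) / 24)]
  rw [sum_eps_mink ν (fun μ => Real.exp (-(4 * ((d:ℝ)-2)⁻¹ * φ x)) / 24 *
      (∑ a, ∑ b, ∑ c, eps a * eps b * eps c *
        (pder μ (fun y => H y ![a,b,c]) x * H x ![a,b,c]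
          + H x ![a,b,c] * pder μ (fun y => H y ![a,b,c]) x)))]
  rw [gQ, hNd]
  linear_combination (Real.exp (-(4 * ((d:ℝ)-2)⁻¹ * φ x)) / 12) * key3B

end GEE
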